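/- Let p be a prime and q = p^e. Define λ_0 = 1, λ_i = g(T^{−i})/(q−1) for 1 ≤ i ≤ q−2, and λ_{q−1} = −q/(q−1), where g(T^{−i}) is the Gauss sum. Then for all x ∈ 𝔽_q, ξ_p^{Tr_{q/p}(x)} = ∑_{i=0}^{q−1} λ_i T(x)^i, and this expansion is unique: if μ_0,…,μ_{q−1} ∈ ℚ_p(ξ_{p(q−1)}) satisfy ξ_p^{Tr_{q/p}(x)} = ∑_{i=0}^{q−1} μ_i T(x)^i for all x ∈ 𝔽_q, then μ_i = λ_i for all i. -/

import Mathlib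

/-- Let `p` be a prime and `q = p^e`.  With `λ_0 = 1`,
`λ_i = g(T^{−i})/(q−1)` for `1 ≤ i ≤ q−2` and `λ_{q−1} = −q/(q−1)` (where
`g(T^{−i})` is the Gauss sum), one has `ξ_p^{Tr_{q/p}(x)} = ∑_{i=0}^{q−1} λ_i T(x)^i`
for all `x ∈ 𝔽_q`, and this expansion is unique.

Here `ℚ_p(ξ_{p(q−1)})` is realized as `CyclotomicField (p(q−1)) ℚ_[p]`, `ξ_p` is a
primitive `p`-th root of unity therein, and the Teichmüller lift `T` is
axiomatized by the hypotheses `hT*`. -/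
theorem stmt_19 (p e : ℕ) [Fact p.Prime] (he : 1 ≤ e)
    (hpos : 0 < p * (p ^ e - 1))
    (F : Type) [Field F] [Fintype F] [DecidableEq F] [Algebra (ZMod p) F]
    (hF : Fintype.card F = p ^ e)
    (ξp : CyclotomicField ((⟨p * (p ^ e - 1), hpos⟩ : ℕ+) : ℕ) ℚ_[p])
    (hξp : IsPrimitiveRoot ξp p)
    (T : F → CyclotomicField ((⟨p * (p ^ e - 1), hpos⟩ : ℕ+) : ℕ) ℚ_[p])
    (hT0 : T 0 = 0)
    (hTmul : ∀ x y, T (x * y) = T x * T y)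
    (hTq : ∀ x, T x ^ (p ^ e) = T x)
    (hTinj : Function.Injective T)
    (g : ℕ → CyclotomicField ((⟨p * (p ^ e - 1), hpos⟩ : ℕ+) : ℕ) ℚ_[p])
    (hg : ∀ i, g i = ∑ x ∈ (Finset.univ \ {0} : Finset F),
        ξp ^ (Algebra.trace (ZMod p) F x).val * (T x)⁻¹ ^ i)
    (lam : ℕ → CyclotomicField ((⟨p * (p ^ e - 1), hpos⟩ : ℕ+) : ℕ) ℚ_[p])
    (hlam : ∀ i, lam i = if i = 0 then 1 else if i = p ^ e - 1
        then -((p ^ e : ℕ) : CyclotomicField ((⟨p * (p ^ e - 1), hpos⟩ : ℕ+) : ℕ) ℚ_[p])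
          * (((p ^ e - 1 : ℕ) : CyclotomicField ((⟨p * (p ^ e - 1), hpos⟩ : ℕ+) : ℕ) ℚ_[p]))⁻¹
        else g i * (((p ^ e - 1 : ℕ) : CyclotomicField ((⟨p * (p ^ e - 1), hpos⟩ : ℕ+) : ℕ) ℚ_[p]))⁻¹) :
    (∀ x : F, ξp ^ (Algebra.trace (ZMod p) F x).val
        = ∑ i ∈ Finset.range (p ^ e), lam i * T x ^ i) ∧
    (∀ μ : ℕ → CyclotomicField ((⟨p * (p ^ e - 1), hpos⟩ : ℕ+) : ℕ) ℚ_[p],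
      (∀ x : F, ξp ^ (Algebra.trace (ZMod p) F x).val
          = ∑ i ∈ Finset.range (p ^ e), μ i * T x ^ i) →
      ∀ i < p ^ e, μ i = lam i) := by
  classical
  have hp : p.Prime := Fact.out
  haveI : NeZero p := ⟨hp.ne_zero⟩
  have hq2 : 2 ≤ p ^ e := le_trans hp.two_le (Nat.le_self_pow (by omega) p)
  haveI : CharZero (CyclotomicField ((⟨p * (p ^ e - 1), hpos⟩ : ℕ+) : ℕ) ℚ_[p]) :=
    charZero_of_injective_algebraMap
      (algebraMap ℚ_[p] (CyclotomicField ((⟨p * (p ^ e - 1), hpos⟩ : ℕ+) : ℕ) ℚ_[p])).injective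
  have hncast : ((p ^ e - 1 : ℕ) : CyclotomicField ((⟨p * (p ^ e - 1), hpos⟩ : ℕ+) : ℕ) ℚ_[p]) ≠ 0 :=
    Nat.cast_ne_zero.mpr (by omega)
  -- Teichmüller properties
  have hTne : ∀ x : F, x ≠ 0 → T x ≠ 0 := fun x hx h => hx (hTinj (h.trans hT0.symm))
  have hTu : ∀ x : F, x ≠ 0 → T x ^ (p ^ e - 1) = 1 := by
    intro x hx
    have h1 : T x ^ (p ^ e - 1) * T x = 1 * T x := by
      rw [one_mul, ← pow_succ, Nat.sub_add_cancel (by omega)]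
      exact hTq x
    exact mul_right_cancel₀ (hTne x hx) h1
  -- additive character properties
  have hξpow : ξp ^ p = 1 := hξp.pow_eq_one
  have hperiod : ∀ n : ℕ, ξp ^ n = ξp ^ (n % p) := by
    intro n
    conv_lhs => rw [← Nat.mod_add_div n p]
    rw [pow_add, pow_mul, hξpow, one_pow, mul_one]
  have hψ : ∀ a b : ZMod p, ξp ^ (a + b).val = ξp ^ a.val * ξp ^ b.val := by
    intro a b
    rw [ZMod.val_add, ← hperiod, pow_add]
  -- total character sum vanishes
  haveI : Module.Finite (ZMod p) F := Module.finite_iff_finite.mpr inferInstance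
  obtain ⟨z, hz⟩ := Algebra.trace_surjective (ZMod p) F (1 : ZMod p)
  have hS : ∑ y : F, ξp ^ (Algebra.trace (ZMod p) F y).val = 0 := by
    have h1 : ∑ y : F, ξp ^ (Algebra.trace (ZMod p) F y).val
        = ξp * ∑ y : F, ξp ^ (Algebra.trace (ZMod p) F y).val := by
      calc ∑ y : F, ξp ^ (Algebra.trace (ZMod p) F y).val
          = ∑ y : F, ξp ^ (Algebra.trace (ZMod p) F (y + z)).val :=
            (Fintype.sum_equiv (Equiv.addRight z) _ _ (fun y => rfl)).symm
        _ = ∑ y : F, ξp * ξp ^ (Algebra.trace (ZMod p) F y).val := by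
            refine Finset.sum_congr rfl fun y _ => ?_
            rw [map_add, hψ, hz, ZMod.val_one, pow_one]; ring
        _ = ξp * ∑ y : F, ξp ^ (Algebra.trace (ZMod p) F y).val := by
            rw [← Finset.mul_sum]
    have hξne1 : ξp ≠ 1 := by
      intro h
      exact (hξp.pow_ne_one_of_pos_of_lt one_ne_zero hp.one_lt) (by rwa [pow_one])
    have h2 : (1 - ξp) * ∑ y : F, ξp ^ (Algebra.trace (ZMod p) F y).val = 0 := by
      rw [sub_mul, one_mul, ← h1, sub_self]
    rcases mul_eq_zero.mp h2 with h | h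
    · exact absurd (sub_eq_zero.mp h).symm hξne1
    · exact h
  have hTr0 : ξp ^ (Algebra.trace (ZMod p) F (0:F)).val = 1 := by
    rw [map_zero, ZMod.val_zero, pow_zero]
  have hg0 : g 0 = -1 := by
    have hsplit : ∑ y : F, ξp ^ (Algebra.trace (ZMod p) F y).val
        = (∑ y ∈ (Finset.univ \ {0} : Finset F), ξp ^ (Algebra.trace (ZMod p) F y).val)
          + ∑ y ∈ ({0} : Finset F), ξp ^ (Algebra.trace (ZMod p) F y).val := by
      rw [Finset.sum_sdiff (Finset.subset_univ _)]
    rw [hS, Finset.sum_singleton, hTr0] at hsplit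
    rw [hg 0]
    simp only [pow_zero, mul_one]
    linear_combination -hsplit
  -- the core orthogonality computation
  have hcore : ∀ x : F, x ≠ 0 →
      ∑ i ∈ Finset.range (p ^ e - 1), g i * T x ^ i
        = ((p ^ e - 1 : ℕ) : CyclotomicField ((⟨p * (p ^ e - 1), hpos⟩ : ℕ+) : ℕ) ℚ_[p])
            * ξp ^ (Algebra.trace (ZMod p) F x).val := by
    intro x hx
    have h1 : ∑ i ∈ Finset.range (p ^ e - 1), g i * T x ^ i
        = ∑ y ∈ (Finset.univ \ {0} : Finset F), ξp ^ (Algebra.trace (ZMod p) F y).val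
            * ∑ i ∈ Finset.range (p ^ e - 1), (T x * (T y)⁻¹) ^ i := by
      simp only [hg, Finset.sum_mul, Finset.mul_sum, mul_pow]
      rw [Finset.sum_comm]
      exact Finset.sum_congr rfl fun y _ => Finset.sum_congr rfl fun i _ => by ring
    have hother : ∀ y ∈ (Finset.univ \ {0} : Finset F), y ≠ x →
        ξp ^ (Algebra.trace (ZMod p) F y).val
          * ∑ i ∈ Finset.range (p ^ e - 1), (T x * (T y)⁻¹) ^ i = 0 := by
      intro y hy hyx
      have hy0 : y ≠ 0 := by
        intro h; apply (Finset.mem_sdiff.mp hy).2; simp [h]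
      have hu1 : T x * (T y)⁻¹ ≠ 1 := by
        intro h
        exact hyx (hTinj ((mul_inv_eq_one₀ (hTne y hy0)).mp h)).symm
      have hun : (T x * (T y)⁻¹) ^ (p ^ e - 1) = 1 := by
        rw [mul_pow, hTu x hx, inv_pow, hTu y hy0, inv_one, mul_one]
      rw [geom_sum_eq hu1, hun, sub_self, zero_div, mul_zero]
    rw [h1, Finset.sum_eq_single_of_mem x
      (Finset.mem_sdiff.mpr ⟨Finset.mem_univ x, by simp [hx]⟩) hother]
    rw [mul_inv_cancel₀ (hTne x hx)]
    simp [mul_comm]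
  have hcastq : ((p ^ e : ℕ) : CyclotomicField ((⟨p * (p ^ e - 1), hpos⟩ : ℕ+) : ℕ) ℚ_[p])
      = ((p ^ e - 1 : ℕ) : CyclotomicField ((⟨p * (p ^ e - 1), hpos⟩ : ℕ+) : ℕ) ℚ_[p]) + 1 := by
    rw [Nat.cast_sub (by omega), Nat.cast_one]; ring
  -- existence
  have hmain : ∀ x : F, ξp ^ (Algebra.trace (ZMod p) F x).val
      = ∑ i ∈ Finset.range (p ^ e), lam i * T x ^ i := by
    intro x
    by_cases hx : x = 0
    · subst hx
      rw [hTr0, Finset.sum_eq_single_of_mem 0 (Finset.mem_range.mpr (by omega))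
        (fun i _ hi0 => by rw [hT0, zero_pow hi0, mul_zero])]
      rw [hlam 0, if_pos rfl, pow_zero, mul_one]
    · have hqsucc : Finset.range (p ^ e) = Finset.range ((p ^ e - 1) + 1) := by
        congr 1; omega
      rw [hqsucc, Finset.sum_range_succ]
      have hlast : lam (p ^ e - 1) * T x ^ (p ^ e - 1)
          = -((p ^ e : ℕ) : CyclotomicField ((⟨p * (p ^ e - 1), hpos⟩ : ℕ+) : ℕ) ℚ_[p])
              * (((p ^ e - 1 : ℕ) : CyclotomicField ((⟨p * (p ^ e - 1), hpos⟩ : ℕ+) : ℕ) ℚ_[p]))⁻¹ := by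
        rw [hlam (p ^ e - 1), if_neg (by omega), if_pos rfl, hTu x hx, mul_one]
      have hd : ∑ i ∈ Finset.range (p ^ e - 1),
          (lam i - g i * (((p ^ e - 1 : ℕ) : CyclotomicField ((⟨p * (p ^ e - 1), hpos⟩ : ℕ+) : ℕ) ℚ_[p]))⁻¹)
            * T x ^ i
          = 1 + (((p ^ e - 1 : ℕ) : CyclotomicField ((⟨p * (p ^ e - 1), hpos⟩ : ℕ+) : ℕ) ℚ_[p]))⁻¹ := by
        rw [Finset.sum_eq_single_of_mem 0 (Finset.mem_range.mpr (by omega))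
          (fun i hi hi0 => by
            have hiq : i ≠ p ^ e - 1 := by
              have := Finset.mem_range.mp hi; omega
            rw [hlam i, if_neg hi0, if_neg hiq]; ring)]
        rw [hlam 0, if_pos rfl, hg0, pow_zero, mul_one]; ring
      have hsub : ∑ i ∈ Finset.range (p ^ e - 1), lam i * T x ^ i
          - ∑ i ∈ Finset.range (p ^ e - 1),
              g i * (((p ^ e - 1 : ℕ) : CyclotomicField ((⟨p * (p ^ e - 1), hpos⟩ : ℕ+) : ℕ) ℚ_[p]))⁻¹
                * T x ^ i
          = 1 + (((p ^ e - 1 : ℕ) : CyclotomicField ((⟨p * (p ^ e - 1), hpos⟩ : ℕ+) : ℕ) ℚ_[p]))⁻¹ := by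
        rw [← Finset.sum_sub_distrib]
        simpa only [sub_mul] using hd
      have h2 : ∑ i ∈ Finset.range (p ^ e - 1),
          g i * (((p ^ e - 1 : ℕ) : CyclotomicField ((⟨p * (p ^ e - 1), hpos⟩ : ℕ+) : ℕ) ℚ_[p]))⁻¹ * T x ^ i
          = ξp ^ (Algebra.trace (ZMod p) F x).val := by
        have h3 : ∑ i ∈ Finset.range (p ^ e - 1),
            g i * (((p ^ e - 1 : ℕ) : CyclotomicField ((⟨p * (p ^ e - 1), hpos⟩ : ℕ+) : ℕ) ℚ_[p]))⁻¹ * T x ^ i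
            = (((p ^ e - 1 : ℕ) : CyclotomicField ((⟨p * (p ^ e - 1), hpos⟩ : ℕ+) : ℕ) ℚ_[p]))⁻¹
                * ∑ i ∈ Finset.range (p ^ e - 1), g i * T x ^ i := by
          rw [Finset.mul_sum]
          exact Finset.sum_congr rfl fun i _ => by ring
        rw [h3, hcore x hx, ← mul_assoc, inv_mul_cancel₀ hncast, one_mul]
      have hsum_lam : ∑ i ∈ Finset.range (p ^ e - 1), lam i * T x ^ i
          = ξp ^ (Algebra.trace (ZMod p) F x).val + 1
            + (((p ^ e - 1 : ℕ) : CyclotomicField ((⟨p * (p ^ e - 1), hpos⟩ : ℕ+) : ℕ) ℚ_[p]))⁻¹ := by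
        linear_combination hsub + h2
      rw [hsum_lam, hlast, hcastq]
      linear_combination mul_inv_cancel₀ hncast
  refine ⟨hmain, ?_⟩
  -- uniqueness
  intro μ hμ i hi
  have hzero : ∀ x : F, ∑ j ∈ Finset.range (p ^ e), (μ j - lam j) * T x ^ j = 0 := by
    intro x
    have h1 := (hμ x).symm.trans (hmain x)
    simp only [sub_mul, Finset.sum_sub_distrib]
    rw [h1, sub_self]
  have hP0 : (∑ j ∈ Finset.range (p ^ e),
      Polynomial.C (μ j - lam j) * Polynomial.X ^ j) = 0 := by
    refine Polynomial.eq_zero_of_natDegree_lt_card_of_eval_eq_zero _ hTinj (fun x => ?_) ?_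
    · simp only [Polynomial.eval_finset_sum, Polynomial.eval_mul, Polynomial.eval_C,
        Polynomial.eval_pow, Polynomial.eval_X]
      exact hzero x
    · rw [hF]
      refine lt_of_le_of_lt (Polynomial.natDegree_sum_le_of_forall_le _ _ fun j hj => ?_)
        (show p ^ e - 1 < p ^ e by omega)
      exact le_trans (Polynomial.natDegree_C_mul_le _ _)
        (le_trans (Polynomial.natDegree_X_pow_le j) (by
          have := Finset.mem_range.mp hj; omega))
  have hcoeff : (0 : CyclotomicField ((⟨p * (p ^ e - 1), hpos⟩ : ℕ+) : ℕ) ℚ_[p]) = μ i - lam i := by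
    have h4 := congrArg (fun P => Polynomial.coeff P i) hP0
    simp only [Polynomial.coeff_zero] at h4
    rw [← h4, Polynomial.finset_sum_coeff]
    simp only [Polynomial.coeff_C_mul, Polynomial.coeff_X_pow]
    rw [Finset.sum_eq_single_of_mem i (Finset.mem_range.mpr hi)
      (fun j _ hji => by simp [Ne.symm hji])]
    simp
  linear_combination -hcoeff
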